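/- The standard normal hazard function λ(x) = φ(x)/(1 − Φ(x)) is convex on ℝ. -/

import Mathlib

open MeasureTheory ProbabilityTheory

open Filter Topology

/-- Standard normal density. -/
noncomputable def phi (x : ℝ) : ℝ := (Real.sqrt (2 * Real.pi))⁻¹ * Real.exp (-x ^ 2 / 2)

/-- Standard normal CDF. -/
noncomputable def Phi (x : ℝ) : ℝ := ∫ s in Set.Iic x, phi s

/-- Standard normal hazard function (inverse Mills ratio). -/
noncomputable def lam (x : ℝ) : ℝ := phi x / (1 - Phi x)

/-- Mills-ratio-type function `φ(x)/Φ(x)`. -/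
noncomputable def mills (x : ℝ) : ℝ := phi x / Phi x

lemma phi_pos (x : ℝ) : 0 < phi x := by
  unfold phi
  have h : 0 < Real.sqrt (2 * Real.pi) := Real.sqrt_pos.mpr (by positivity)
  positivity

lemma phi_cont : Continuous phi := by
  unfold phi; fun_prop

lemma phi_eq : phi = fun x => (Real.sqrt (2 * Real.pi))⁻¹ * Real.exp (-(1/2) * x ^ 2) := by
  funext x; unfold phi; ring_nf

lemma phi_integrable : Integrable phi := by
  rw [phi_eq]
  exact (integrable_exp_neg_mul_sq (by norm_num : (0:ℝ) < 1/2)).const_mul _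

lemma phi_integral : ∫ x, phi x = 1 := by
  rw [phi_eq, MeasureTheory.integral_const_mul, integral_gaussian]
  rw [show Real.pi / (1/2) = 2 * Real.pi by ring]
  exact inv_mul_cancel₀ (ne_of_gt (Real.sqrt_pos.mpr (by positivity)))

lemma phi_hasDerivAt (x : ℝ) : HasDerivAt phi (-x * phi x) x := by
  have h1 : HasDerivAt (fun y : ℝ => -y ^ 2 / 2) (-(2 * x ^ 1) / 2) x :=
    ((hasDerivAt_pow 2 x).neg).div_const 2
  have h2 := (h1.exp).const_mul (Real.sqrt (2 * Real.pi))⁻¹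
  refine h2.congr_deriv ?_
  unfold phi; ring

lemma Phi_hasDerivAt (x : ℝ) : HasDerivAt Phi (phi x) x := by
  have key : Phi = fun y => Phi 0 + ∫ t in (0:ℝ)..y, phi t := by
    funext y
    have := intervalIntegral.integral_Iic_sub_Iic (phi_integrable.integrableOn)
      (phi_integrable.integrableOn) (a := 0) (b := y)
    unfold Phi; linarith
  have h1 : HasDerivAt (fun y => ∫ t in (0:ℝ)..y, phi t) (phi x) x :=
    intervalIntegral.integral_hasDerivAt_right (phi_integrable.intervalIntegrable)
      phi_cont.stronglyMeasurable.stronglyMeasurableAtFilter phi_cont.continuousAt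
  rw [key]
  exact h1.const_add _

lemma Q_eq (x : ℝ) : 1 - Phi x = ∫ s in Set.Ioi x, phi s := by
  have h : (∫ s in Set.Iic x, phi s) + ∫ s in Set.Ioi x, phi s = ∫ s, phi s := by
    rw [← MeasureTheory.setIntegral_union (Set.Iic_disjoint_Ioi le_rfl) measurableSet_Ioi
      phi_integrable.integrableOn phi_integrable.integrableOn, Set.Iic_union_Ioi,
      MeasureTheory.setIntegral_univ]
  rw [phi_integral] at h
  unfold Phi; linarith

lemma Q_pos (x : ℝ) : 0 < 1 - Phi x := by
  rw [Q_eq]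
  rw [MeasureTheory.setIntegral_pos_iff_support_of_nonneg_ae
    (Filter.Eventually.of_forall fun y => (phi_pos y).le) phi_integrable.integrableOn]
  have : Function.support phi = Set.univ := by
    ext y; simp [Function.mem_support, ne_of_gt (phi_pos y)]
  rw [this, Set.univ_inter, Real.volume_Ioi]
  exact ENNReal.zero_lt_top

lemma Q_tendsto : Tendsto (fun x => 1 - Phi x) atTop (𝓝 0) := by
  have h := MeasureTheory.tendsto_setIntegral_of_antitone (μ := volume) (f := phi)
    (s := fun r : ℝ => Set.Ioi r) (fun r => measurableSet_Ioi)
    (fun a b hab => Set.Ioi_subset_Ioi hab) ⟨0, phi_integrable.integrableOn⟩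
  have hempty : ⋂ r : ℝ, Set.Ioi r = (∅ : Set ℝ) := by
    ext y; simp only [Set.mem_iInter, Set.mem_Ioi, Set.mem_empty_iff_false, iff_false, not_forall,
      not_lt]
    exact ⟨y, le_rfl⟩
  rw [hempty] at h
  simp only [MeasureTheory.Measure.restrict_empty, MeasureTheory.integral_zero_measure] at h
  exact h.congr fun x => (Q_eq x).symm

lemma phi_tendsto : Tendsto phi atTop (𝓝 0) := by
  rw [phi_eq]
  rw [show (0:ℝ) = (Real.sqrt (2 * Real.pi))⁻¹ * 0 by ring]
  apply Tendsto.const_mul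
  apply Real.tendsto_exp_atBot.comp
  have h1 : Tendsto (fun x : ℝ => (1/2) * x ^ 2) atTop atTop :=
    (tendsto_pow_atTop (two_ne_zero)).const_mul_atTop (by norm_num)
  have h2 : Tendsto (fun x : ℝ => -((1/2) * x ^ 2)) atTop atBot := tendsto_neg_atBot_iff.mpr h1
  exact h2.congr fun x => by ring

-- polynomial core: 2y(y²+6) ≤ (2y²+4)s where s = √(y²+8)
lemma poly_core (y s : ℝ) (hs2 : s ^ 2 = y ^ 2 + 8) (hs0 : 0 ≤ s) :
    2 * y * (y ^ 2 + 6) ≤ (2 * y ^ 2 + 4) * s := by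
  rcases le_or_gt y 0 with h | h
  · have h1 : 2 * y * (y ^ 2 + 6) ≤ 0 := by nlinarith [sq_nonneg y]
    have h2 : 0 ≤ (2 * y ^ 2 + 4) * s := by positivity
    linarith
  · have hs0' : 0 < s := by nlinarith
    have hAB : 0 < (2 * y ^ 2 + 4) * s + 2 * y * (y ^ 2 + 6) := by positivity
    have hA2 : ((2 * y ^ 2 + 4) * s) ^ 2 = (2 * y ^ 2 + 4) ^ 2 * (y ^ 2 + 8) := by
      rw [mul_pow, hs2]
    nlinarith [hAB, hA2]

lemma sqrt_sq8 (y : ℝ) : (Real.sqrt (y ^ 2 + 8)) ^ 2 = y ^ 2 + 8 :=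
  Real.sq_sqrt (by positivity)

lemma D_pos {y : ℝ} (hy : -1 < y) : 0 < 3 * y + Real.sqrt (y ^ 2 + 8) := by
  rcases le_or_gt 0 y with h | h
  · have := Real.sqrt_pos.mpr (show (0:ℝ) < y ^ 2 + 8 by positivity)
    linarith
  · nlinarith [sqrt_sq8 y, Real.sqrt_nonneg (y ^ 2 + 8)]

noncomputable def hfun (y : ℝ) : ℝ :=
  4 * phi y / (3 * y + Real.sqrt (y ^ 2 + 8)) - (1 - Phi y)

lemma sqrtD_hasDerivAt (y : ℝ) :
    HasDerivAt (fun z : ℝ => Real.sqrt (z ^ 2 + 8))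
      (y / Real.sqrt (y ^ 2 + 8)) y := by
  have h0 : (y:ℝ) ^ 2 + 8 ≠ 0 := by positivity
  have h1 : HasDerivAt (fun z : ℝ => z ^ 2 + 8) (2 * y ^ 1) y :=
    (hasDerivAt_pow 2 y).add_const 8
  have h2 := h1.sqrt h0
  convert h2 using 1
  rw [pow_one]
  ring

lemma hfun_hasDerivAt {y : ℝ} (hy : -1 < y) :
    HasDerivAt hfun
      ((4 * (-y * phi y) * (3 * y + Real.sqrt (y ^ 2 + 8)) -
          4 * phi y * (3 + y / Real.sqrt (y ^ 2 + 8))) /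
        (3 * y + Real.sqrt (y ^ 2 + 8)) ^ 2 + phi y) y := by
  have hD := D_pos hy
  have h1 : HasDerivAt (fun z : ℝ => 4 * phi z) (4 * (-y * phi y)) y :=
    (phi_hasDerivAt y).const_mul 4
  have h2 : HasDerivAt (fun z : ℝ => 3 * z + Real.sqrt (z ^ 2 + 8))
      (3 + y / Real.sqrt (y ^ 2 + 8)) y := by
    have := ((hasDerivAt_id y).const_mul 3).add (sqrtD_hasDerivAt y)
    exact this.congr_deriv (by ring)
  have h3 := h1.div h2 (ne_of_gt hD)
  have h4 : HasDerivAt (fun z : ℝ => 1 - Phi z) (-(phi y)) y :=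
    (Phi_hasDerivAt y).const_sub 1
  have := h3.sub h4
  refine this.congr_deriv ?_
  ring

lemma hfun_deriv_nonpos {y : ℝ} (hy : -1 < y) :
    (4 * (-y * phi y) * (3 * y + Real.sqrt (y ^ 2 + 8)) -
          4 * phi y * (3 + y / Real.sqrt (y ^ 2 + 8))) /
        (3 * y + Real.sqrt (y ^ 2 + 8)) ^ 2 + phi y ≤ 0 := by
  set s := Real.sqrt (y ^ 2 + 8) with hsdef
  have hs2 : s ^ 2 = y ^ 2 + 8 := sqrt_sq8 y
  have hs0 : 0 < s := Real.sqrt_pos.mpr (by positivity)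
  have hD : 0 < 3 * y + s := D_pos hy
  have hφ : 0 < phi y := phi_pos y
  -- key: D² ≤ 4yD + 12 + 4y/s
  have hpoly : 2 * y * (y ^ 2 + 6) ≤ (2 * y ^ 2 + 4) * s := poly_core y s hs2 hs0.le
  have hmul : s * (3 * y + s) ^ 2 ≤ s * (4 * y * (3 * y + s) + 12) + 4 * y := by
    nlinarith [hpoly, hs2]
  have hkey : (3 * y + s) ^ 2 ≤ 4 * y * (3 * y + s) + 12 + 4 * y / s := by
    have h4 : 4 * y / s * s = 4 * y := div_mul_cancel₀ _ (ne_of_gt hs0)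
    nlinarith [hmul, h4, hs0]
  have heq : (4 * (-y * phi y) * (3 * y + s) - 4 * phi y * (3 + y / s)) / (3 * y + s) ^ 2
      + phi y
      = phi y * ((3 * y + s) ^ 2 - (4 * y * (3 * y + s) + 12 + 4 * y / s)) / (3 * y + s) ^ 2 := by
    have hD' : 3 * y + s ≠ 0 := hD.ne'
    have hs' : s ≠ 0 := hs0.ne'
    rw [div_add' _ _ _ (pow_ne_zero 2 hD'), div_left_inj' (pow_ne_zero 2 hD')]
    field_simp
    ring
  rw [heq]
  apply div_nonpos_of_nonpos_of_nonneg _ (sq_nonneg _)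
  apply mul_nonpos_of_nonneg_of_nonpos hφ.le
  linarith

lemma hfun_tendsto : Tendsto hfun atTop (𝓝 0) := by
  have hA : Tendsto (fun y : ℝ => 4 * phi y / (3 * y + Real.sqrt (y ^ 2 + 8))) atTop (𝓝 0) := by
    apply squeeze_zero' (g := fun y => 4 * phi y / 3)
    · filter_upwards [eventually_ge_atTop (1:ℝ)] with y hy
      have hD : 0 < 3 * y + Real.sqrt (y ^ 2 + 8) := D_pos (by linarith)
      exact div_nonneg (by nlinarith [phi_pos y]) hD.le
    · filter_upwards [eventually_ge_atTop (1:ℝ)] with y hy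
      have h3 : (3:ℝ) ≤ 3 * y + Real.sqrt (y ^ 2 + 8) := by
        nlinarith [Real.sqrt_nonneg (y ^ 2 + 8)]
      exact div_le_div_of_nonneg_left (by nlinarith [phi_pos y]) (by norm_num) h3
    · have := (phi_tendsto.const_mul (4:ℝ)).div_const 3
      simpa using this
  have := hA.sub Q_tendsto
  rw [sub_zero] at this
  exact this

lemma key_ineq (x : ℝ) : (3 * x + Real.sqrt (x ^ 2 + 8)) * (1 - Phi x) ≤ 4 * phi x := by
  rcases le_or_gt x (-1) with hx | hx
  · have h1 : 3 * x + Real.sqrt (x ^ 2 + 8) ≤ 0 := by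
      nlinarith [sqrt_sq8 x, Real.sqrt_nonneg (x ^ 2 + 8)]
    have := mul_nonpos_of_nonpos_of_nonneg h1 (Q_pos x).le
    nlinarith [phi_pos x]
  · have h0 : 0 ≤ hfun x := by
      have anti : AntitoneOn hfun (Set.Ici x) := by
        apply antitoneOn_of_deriv_nonpos (convex_Ici x)
        · intro y hy
          have hy' : -1 < y := lt_of_lt_of_le hx hy
          exact (hfun_hasDerivAt hy').continuousAt.continuousWithinAt
        · intro y hy
          rw [interior_Ici] at hy
          exact (hfun_hasDerivAt (hx.trans hy)).differentiableAt.differentiableWithinAt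
        · intro y hy
          rw [interior_Ici] at hy
          have hy' : -1 < y := hx.trans hy
          rw [(hfun_hasDerivAt hy').deriv]
          exact hfun_deriv_nonpos hy'
      refine le_of_tendsto hfun_tendsto ?_
      filter_upwards [eventually_ge_atTop x] with y hy
      exact anti (Set.mem_Ici.mpr le_rfl) (Set.mem_Ici.mpr hy) hy
    have hD : 0 < 3 * x + Real.sqrt (x ^ 2 + 8) := D_pos hx
    unfold hfun at h0
    rw [sub_nonneg, le_div_iff₀ hD] at h0
    linarith

lemma lam_hasDerivAt (x : ℝ) : HasDerivAt lam (lam x * (lam x - x)) x := by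
  have hQ : (1 - Phi x) ≠ 0 := ne_of_gt (Q_pos x)
  have h := (phi_hasDerivAt x).div ((Phi_hasDerivAt x).const_sub 1) hQ
  have heq : (-x * phi x * (1 - Phi x) - phi x * -phi x) / (1 - Phi x) ^ 2
      = lam x * (lam x - x) := by
    unfold lam
    field_simp
    ring
  rw [heq] at h
  exact h

lemma lam_pos (x : ℝ) : 0 < lam x := div_pos (phi_pos x) (Q_pos x)

lemma lam_deriv2 (x : ℝ) :
    HasDerivAt (fun y => lam y * (lam y - y))
      (lam x * (2 * lam x ^ 2 - 3 * x * lam x + x ^ 2 - 1)) x := by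
  have h := (lam_hasDerivAt x).mul ((lam_hasDerivAt x).sub (hasDerivAt_id x))
  refine h.congr_deriv ?_
  simp only [Pi.sub_apply, id]
  ring

lemma lam_lower (x : ℝ) : 3 * x + Real.sqrt (x ^ 2 + 8) ≤ 4 * lam x := by
  have h := key_ineq x
  have hQ := Q_pos x
  rw [show (4:ℝ) * lam x = 4 * phi x / (1 - Phi x) by unfold lam; ring, le_div_iff₀ hQ]
  linarith


/-- the standard normal hazard function `λ` is convex on `ℝ`. -/
theorem stmt_15 : ConvexOn ℝ Set.univ lam := by
  apply convexOn_of_hasDerivWithinAt2_nonneg (f' := fun x => lam x * (lam x - x))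
    (f'' := fun x => lam x * (2 * lam x ^ 2 - 3 * x * lam x + x ^ 2 - 1)) convex_univ
  · exact fun x _ => (lam_hasDerivAt x).continuousAt.continuousWithinAt
  · exact fun x _ => (lam_hasDerivAt x).hasDerivWithinAt
  · exact fun x _ => (lam_deriv2 x).hasDerivWithinAt
  · intro x _
    apply mul_nonneg (lam_pos x).le
    have h1 := lam_lower x
    have h2 := Real.sqrt_nonneg (x ^ 2 + 8)
    have h3 := sqrt_sq8 x
    nlinarith [h1, h2, h3]
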